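/- Let $M_{p,n}$ be a $p \times n$ complex matrix with last row $Y^* $ (so $M_{p,n} = \begin{pmatrix} M_{p-1,n} \\ Y^* \end{pmatrix}$ with $Y \in \mathbb{C}^n$), and suppose no singular value of $M_{p-1,n}$ equals $\sigma_i(M_{p,n})$. Then $\sum_{j=1}^{\min(p-1,n)} \frac{\sigma_j(M_{p-1,n})^2\,|u_j(M_{p-1,n})^* Y|^2}{\sigma_j(M_{p-1,n})^2 - \sigma_i(M_{p,n})^2} = \|Y\|^2 - \sigma_i(M_{p,n})^2$, where $u_j(M_{p-1,n}) \in \mathbb{C}^n$ is an orthonormal system of right singular vectors of $M_{p-1,n}$ corresponding to its non-trivial singular values. -/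

import Mathlib

open Matrix

/-- The singular values of a `p × m` complex matrix, arranged in increasing order:
the square roots of the eigenvalues of `A * Aᴴ`. -/
noncomputable def singVals {p m : ℕ} (A : Matrix (Fin p) (Fin m) ℂ) : Fin p → ℝ :=
  fun i =>
    Real.sqrt ((Matrix.isHermitian_mul_conjTranspose_self A).eigenvalues
      (Tuple.sort ((Matrix.isHermitian_mul_conjTranspose_self A).eigenvalues) i))

section Aux

lemma vmv_mulVec {n m : ℕ} (a : Fin m → ℂ) (b x : Fin n → ℂ) :
    vecMulVec a b *ᵥ x = (b ⬝ᵥ x) • a := by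
  ext k
  simp only [mulVec, dotProduct, vecMulVec_apply, Pi.smul_apply, smul_eq_mul,
    Finset.sum_mul, Finset.mul_sum]
  exact Finset.sum_congr rfl fun l _ => by ring

lemma trace_eq_sum_eig {p : ℕ} {B : Matrix (Fin p) (Fin p) ℂ} (hB : B.IsHermitian) :
    B.trace = ∑ k, (hB.eigenvalues k : ℂ) := by
  conv_lhs => rw [hB.spectral_theorem, Unitary.conjStarAlgAut_apply]
  rw [trace_mul_cycle, Unitary.coe_star_mul_self, one_mul, trace_diagonal]
  simp

lemma no_eig_inj {p : ℕ} {B : Matrix (Fin p) (Fin p) ℂ} (hB : B.IsHermitian) {μ : ℝ}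
    (h : ∀ k, hB.eigenvalues k ≠ μ) {x : Fin p → ℂ}
    (hx : B *ᵥ x = (μ : ℂ) • x) : x = 0 := by
  set V : Matrix (Fin p) (Fin p) ℂ := (hB.eigenvectorUnitary : Matrix (Fin p) (Fin p) ℂ) with hV
  have hVV : star V * V = 1 := Unitary.coe_star_mul_self hB.eigenvectorUnitary
  have hVV' : V * star V = 1 := mul_eq_one_comm.mp hVV
  set y := star V *ᵥ x with hy
  have key : star V * B = diagonal (RCLike.ofReal ∘ hB.eigenvalues) * star V := by
    conv_lhs => rw [hB.spectral_theorem, Unitary.conjStarAlgAut_apply]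
    simp only [← mul_assoc]
    rw [hVV, one_mul]
  have hDy : diagonal (RCLike.ofReal ∘ hB.eigenvalues) *ᵥ y = (μ : ℂ) • y := by
    rw [hy, mulVec_mulVec, ← key, ← mulVec_mulVec, hx, mulVec_smul]
  have hy0 : y = 0 := by
    ext k
    have := congrFun hDy k
    simp only [mulVec_diagonal, Function.comp_apply, Pi.smul_apply, smul_eq_mul] at this
    have hne : (hB.eigenvalues k : ℂ) ≠ (μ : ℂ) := by
      exact_mod_cast fun hc => h k (by exact_mod_cast hc)
    rcases mul_eq_mul_right_iff.mp this with h' | h'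
    · exact absurd h' hne
    · exact h'
  have : V *ᵥ y = x := by
    rw [hy, mulVec_mulVec, hVV', one_mulVec]
  rw [← this, hy0, mulVec_zero]


lemma vmv_mul_vmv {n m q : ℕ} (a : Fin m → ℂ) (b c : Fin n → ℂ) (d : Fin q → ℂ) :
    vecMulVec a b * vecMulVec c d = (b ⬝ᵥ c) • vecMulVec a d := by
  ext k l
  simp only [mul_apply, vecMulVec_apply, dotProduct, Matrix.smul_apply, smul_eq_mul,
    Finset.sum_mul, Finset.mul_sum]
  exact Finset.sum_congr rfl fun j _ => by ring

lemma mul_vmv {n m q : ℕ} (A : Matrix (Fin m) (Fin n) ℂ) (a : Fin n → ℂ) (b : Fin q → ℂ) :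
    A * vecMulVec a b = vecMulVec (A *ᵥ a) b := by
  ext k l
  simp only [mul_apply, vecMulVec_apply, mulVec, dotProduct, Finset.sum_mul]
  exact Finset.sum_congr rfl fun j _ => by ring

lemma completeness {p n N : ℕ} (M' : Matrix (Fin p) (Fin n) ℂ)
    (u : Fin N → Fin n → ℂ)
    (huo : ∀ j k, star (u j) ⬝ᵥ u k = if j = k then (1:ℂ) else 0)
    (s : Fin N → ℝ)
    (hright : ∀ j, (M'ᴴ * M') *ᵥ u j = ((s j ^ 2 : ℝ) : ℂ) • u j)
    (hcase : N = n ∨ (M' * M'ᴴ).trace = ∑ j, ((s j ^ 2 : ℝ) : ℂ))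
    (Y : Fin n → ℂ) :
    M' *ᵥ (Y - ∑ j, (star (u j) ⬝ᵥ Y) • u j) = 0 := by
  classical
  set P : Matrix (Fin n) (Fin n) ℂ := ∑ j, vecMulVec (u j) (star (u j)) with hP
  have hPY : P *ᵥ Y = ∑ j, (star (u j) ⬝ᵥ Y) • u j := by
    ext k
    simp only [hP, mulVec, dotProduct, Finset.sum_apply, Pi.smul_apply, smul_eq_mul,
      Matrix.sum_apply, vecMulVec_apply, Finset.sum_mul, Finset.mul_sum, Pi.star_apply]
    rw [Finset.sum_comm]
    exact Finset.sum_congr rfl fun j _ => Finset.sum_congr rfl fun l _ => by ring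
  have key : M' * (1 - P) = 0 := by
    rcases hcase with hNn | htr
    · -- u is an orthonormal basis; P = 1
      subst hNn
      have hP1 : P = 1 := by
        set U := (Matrix.of (fun k j => u j k) : Matrix (Fin N) (Fin N) ℂ) with hU
        have hUU : Uᴴ * U = 1 := by
          ext j k
          simpa [mul_apply, conjTranspose_apply, hU, dotProduct, one_apply] using huo j k
        have hUU' : U * Uᴴ = 1 := mul_eq_one_comm.mp hUU
        rw [hP, ← hUU']
        ext k l
        simp [mul_apply, conjTranspose_apply, hU, vecMulVec_apply, Matrix.sum_apply]
      rw [hP1]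
      simp
    · -- trace argument
      have hP2 : P * P = P := by
        rw [hP, Finset.sum_mul]
        rw [Finset.sum_congr rfl (fun j _ => Finset.mul_sum _ _ _)]
        have : ∀ j k : Fin N, vecMulVec (u j) (star (u j)) * vecMulVec (u k) (star (u k))
            = if j = k then vecMulVec (u j) (star (u k)) else 0 := by
          intro j k
          rw [vmv_mul_vmv, huo]
          split <;> simp
        simp only [this]
        refine Finset.sum_congr rfl fun j _ => ?_
        rw [Finset.sum_eq_single j]
        · simp
        · intro b _ hb
          simp [Ne.symm hb]
        · simp
      have hPH : Pᴴ = P := by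
        rw [hP, conjTranspose_sum]
        refine Finset.sum_congr rfl fun j _ => ?_
        ext k l
        simp [conjTranspose_apply, vecMulVec_apply, mul_comm]
      set Q : Matrix (Fin p) (Fin n) ℂ := M' * (1 - P) with hQ
      have h1P : (1 - P) * (1 - P) = 1 - P := by
        rw [sub_mul, mul_sub, mul_sub, hP2, one_mul, mul_one, one_mul]
        abel
      have htrQ : (Qᴴ * Q).trace = 0 := by
        have h2 : Qᴴ * Q = (1 - P) * ((M'ᴴ * M') * (1 - P)) := by
          rw [hQ, conjTranspose_mul, conjTranspose_sub, conjTranspose_one, hPH,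
            Matrix.mul_assoc, ← Matrix.mul_assoc M'ᴴ M' (1 - P)]
        rw [h2, trace_mul_comm, Matrix.mul_assoc (M'ᴴ * M') (1 - P) (1 - P), h1P]
        rw [Matrix.mul_sub, Matrix.mul_one, trace_sub]
        have h3 : ((M'ᴴ * M') * P).trace = ∑ j, ((s j ^ 2 : ℝ) : ℂ) := by
          rw [hP, Matrix.mul_sum, trace_sum]
          refine Finset.sum_congr rfl fun j _ => ?_
          rw [mul_vmv, hright]
          have : vecMulVec (((s j ^ 2 : ℝ) : ℂ) • u j) (star (u j))
              = ((s j ^ 2 : ℝ) : ℂ) • vecMulVec (u j) (star (u j)) := by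
            ext k l; simp [vecMulVec_apply]; ring
          rw [this, trace_smul, smul_eq_mul]
          have : (vecMulVec (u j) (star (u j))).trace = star (u j) ⬝ᵥ u j := by
            simp [trace, diag, vecMulVec_apply, dotProduct, mul_comm]
          rw [this, huo]
          simp
        rw [h3, trace_mul_comm, htr, sub_self]
      have hQ0 : Q = 0 := by
        have h4 : ∑ k, ∑ a, Complex.normSq (Q a k) = 0 := by
          have h5 : (Qᴴ * Q).trace = ∑ k, ∑ a, (Complex.normSq (Q a k) : ℂ) := by
            simp only [trace, diag, mul_apply, conjTranspose_apply]
            refine Finset.sum_congr rfl fun k _ => Finset.sum_congr rfl fun a _ => ?_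
            rw [Complex.star_def, ← Complex.normSq_eq_conj_mul_self]
          rw [htrQ] at h5
          exact_mod_cast h5.symm
        ext a k
        have h6 := (Finset.sum_eq_zero_iff_of_nonneg
          (fun k _ => Finset.sum_nonneg fun a _ => Complex.normSq_nonneg _)).mp h4 k
          (Finset.mem_univ k)
        have h7 := (Finset.sum_eq_zero_iff_of_nonneg
          (fun a _ => Complex.normSq_nonneg _)).mp h6 a (Finset.mem_univ a)
        simpa using Complex.normSq_eq_zero.mp h7
      exact hQ0
  have hMP : M' * P = M' := by
    have h8 := key
    rw [Matrix.mul_sub, Matrix.mul_one, sub_eq_zero] at h8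
    exact h8.symm
  rw [mulVec_sub, ← hPY, mulVec_mulVec, hMP, sub_self]

lemma key_identity {p n N : ℕ} (M' : Matrix (Fin p) (Fin n) ℂ) (Y : Fin n → ℂ)
    (M : Matrix (Fin (p + 1)) (Fin n) ℂ)
    (hMrow : ∀ (i : Fin p) (j : Fin n), M (Fin.castSucc i) j = M' i j)
    (hMY : ∀ j : Fin n, M (Fin.last p) j = star (Y j))
    (lam : ℝ)
    (hlam : ∃ v : Fin (p+1) → ℂ, v ≠ 0 ∧ (M * Mᴴ) *ᵥ v = (lam : ℂ) • v)
    (hBno : ∀ k, (isHermitian_mul_conjTranspose_self M').eigenvalues k ≠ lam)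
    (s : Fin N → ℝ) (u : Fin N → Fin n → ℂ)
    (huo : ∀ j k, star (u j) ⬝ᵥ u k = if j = k then (1:ℂ) else 0)
    (hright : ∀ j, (M'ᴴ * M') *ᵥ u j = ((s j ^ 2 : ℝ) : ℂ) • u j)
    (hsep : ∀ j, s j ^ 2 ≠ lam)
    (hcomp : M' *ᵥ (Y - ∑ j, (star (u j) ⬝ᵥ Y) • u j) = 0) :
    ∑ j, (s j) ^ 2 * ‖star (u j) ⬝ᵥ Y‖ ^ 2 / ((s j) ^ 2 - lam)
      = (∑ k, ‖Y k‖ ^ 2) - lam := by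
  classical
  obtain ⟨v, hv0, hv⟩ := hlam
  set c : Fin N → ℂ := fun j => star (u j) ⬝ᵥ Y with hc
  set w : Fin N → Fin p → ℂ := fun j => M' *ᵥ u j with hw
  set t : ℂ := v (Fin.last p) with ht
  set v' : Fin p → ℂ := fun b => v (Fin.castSucc b) with hv'
  have hB : (M' * M'ᴴ).IsHermitian := isHermitian_mul_conjTranspose_self M'
  -- blocks of M * Mᴴ
  have hMMc : ∀ a b : Fin p, (M * Mᴴ) (Fin.castSucc a) (Fin.castSucc b) = (M' * M'ᴴ) a b := by
    intro a b
    simp [mul_apply, conjTranspose_apply, hMrow]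
  have hMMl : ∀ a : Fin p, (M * Mᴴ) (Fin.castSucc a) (Fin.last p) = (M' *ᵥ Y) a := by
    intro a
    simp [mul_apply, conjTranspose_apply, hMrow, hMY, mulVec, dotProduct]
  have hMLc : ∀ b : Fin p, (M * Mᴴ) (Fin.last p) (Fin.castSucc b) = star (M' *ᵥ Y) b := by
    intro b
    simp [mul_apply, conjTranspose_apply, hMrow, hMY, star_mulVec, vecMul, dotProduct,
      mulVec, map_sum, mul_comm]
  have hMLl : (M * Mᴴ) (Fin.last p) (Fin.last p) = star Y ⬝ᵥ Y := by
    simp [mul_apply, conjTranspose_apply, hMY, dotProduct, mul_comm]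
  -- eigen equations in block form
  have E1 : (M' * M'ᴴ) *ᵥ v' + t • (M' *ᵥ Y) = (lam : ℂ) • v' := by
    ext b
    have := congrFun hv (Fin.castSucc b)
    simp only [mulVec, dotProduct, Pi.smul_apply, smul_eq_mul] at this ⊢
    rw [Fin.sum_univ_castSucc] at this
    simp only [hMMc, hMMl] at this
    rw [← this]
    simp only [Pi.add_apply, Pi.smul_apply, smul_eq_mul, mulVec, dotProduct]
    ring
  have E2 : star (M' *ᵥ Y) ⬝ᵥ v' + (star Y ⬝ᵥ Y) * t = (lam : ℂ) * t := by
    have := congrFun hv (Fin.last p)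
    simp only [mulVec, dotProduct, Pi.smul_apply, smul_eq_mul] at this
    rw [Fin.sum_univ_castSucc] at this
    simp only [hMLc, hMLl] at this
    simpa [dotProduct, mulVec] using this
  -- expansion of M' *ᵥ Y
  have hMYexp : M' *ᵥ Y = ∑ j, c j • w j := by
    have h1 : M' *ᵥ Y - M' *ᵥ (∑ j, c j • u j) = 0 := by
      rw [← mulVec_sub]; exact hcomp
    have h2 : M' *ᵥ (∑ j, c j • u j) = ∑ j, c j • w j := by
      simp only [hw, ← mulVecLin_apply, map_sum]
      exact Finset.sum_congr rfl fun x _ => (M'.mulVecLin).map_smul _ _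
    rw [sub_eq_zero] at h1
    rw [h1, h2]
  have ww : ∀ j k, star (w j) ⬝ᵥ w k = ((s k ^ 2 : ℝ) : ℂ) * (if j = k then 1 else 0) := by
    intro j k
    have h1 : star (w j) ⬝ᵥ w k = star (u j) ⬝ᵥ ((M'ᴴ * M') *ᵥ u k) := by
      show star (M' *ᵥ u j) ⬝ᵥ (M' *ᵥ u k) = _
      rw [star_mulVec, dotProduct_mulVec, vecMul_vecMul, ← dotProduct_mulVec]
    rw [h1, hright, dotProduct_smul, smul_eq_mul, huo]
  have Bw : ∀ j, (M' * M'ᴴ) *ᵥ w j = ((s j ^ 2 : ℝ) : ℂ) • w j := by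
    intro j
    show (M' * M'ᴴ) *ᵥ (M' *ᵥ u j) = ((s j ^ 2 : ℝ) : ℂ) • (M' *ᵥ u j)
    rw [mulVec_mulVec, Matrix.mul_assoc, ← mulVec_mulVec, hright, mulVec_smul]
  set d : Fin N → ℂ := fun j => star (w j) ⬝ᵥ v' with hd
  have D1 : ∀ j, ((s j ^ 2 : ℝ) : ℂ) * d j + t * (c j * ((s j ^ 2 : ℝ) : ℂ))
      = (lam : ℂ) * d j := by
    intro j
    have h0 := congrArg (fun z => star (w j) ⬝ᵥ z) E1
    simp only [dotProduct_add, dotProduct_smul, smul_eq_mul] at h0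
    have hA : star (w j) ⬝ᵥ ((M' * M'ᴴ) *ᵥ v') = ((s j ^ 2 : ℝ) : ℂ) * d j := by
      have h1 := congrArg star (Bw j)
      rw [star_mulVec, hB.eq, star_smul] at h1
      rw [dotProduct_mulVec, h1]
      simp [smul_dotProduct, hd]
    have hCsum : star (w j) ⬝ᵥ (M' *ᵥ Y) = c j * ((s j ^ 2 : ℝ) : ℂ) := by
      rw [hMYexp]
      have h2 : star (w j) ⬝ᵥ (∑ k, c k • w k) = ∑ k, c k * (star (w j) ⬝ᵥ w k) := by
        simp only [dotProduct, Finset.sum_apply, Pi.smul_apply, smul_eq_mul, Finset.mul_sum]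
        rw [Finset.sum_comm]
        exact Finset.sum_congr rfl fun k _ => Finset.sum_congr rfl fun l _ => by ring
      rw [h2]
      rw [Finset.sum_eq_single j]
      · rw [ww]; simp [mul_comm]
      · intro k _ hk; rw [ww]; simp [Ne.symm hk]
      · intro h; exact absurd (Finset.mem_univ j) h
    rw [hA, hCsum] at h0
    exact h0
  have ht0 : t ≠ 0 := by
    intro h0
    have hv'0 : v' = 0 := by
      apply no_eig_inj hB hBno
      have h1 := E1
      rw [h0, zero_smul, add_zero] at h1
      exact h1
    apply hv0
    ext a
    refine Fin.lastCases ?_ ?_ a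
    · exact h0
    · intro b
      simpa using congrFun hv'0 b
  -- solve for d j
  have hslne : ∀ j, ((lam : ℂ) - ((s j ^ 2 : ℝ) : ℂ)) ≠ 0 := by
    intro j h0
    rw [sub_eq_zero] at h0
    exact hsep j (by exact_mod_cast h0.symm)
  have hdj : ∀ j, d j = t * c j * ((s j ^ 2 : ℝ) : ℂ) / ((lam : ℂ) - ((s j ^ 2 : ℝ) : ℂ)) := by
    intro j
    have h1 := D1 j
    rw [eq_div_iff (hslne j)]
    linear_combination -h1
  -- rewrite E2 dot product
  have hE2L : star (M' *ᵥ Y) ⬝ᵥ v' = ∑ j, (starRingEnd ℂ) (c j) * d j := by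
    rw [hMYexp]
    simp only [dotProduct, hd, Finset.sum_apply, Pi.star_apply, Pi.smul_apply, smul_eq_mul,
      star_sum, star_mul', Complex.star_def, Finset.sum_mul, Finset.mul_sum]
    rw [Finset.sum_comm]
    refine Finset.sum_congr rfl fun k _ => Finset.sum_congr rfl fun l _ => ?_
    ring
  have hS : (∑ j, ((s j ^ 2 : ℝ) : ℂ) * ((starRingEnd ℂ) (c j) * c j)
        / ((lam : ℂ) - ((s j ^ 2 : ℝ) : ℂ))) + star Y ⬝ᵥ Y = (lam : ℂ) := by
    have h1 : t * ((∑ j, ((s j ^ 2 : ℝ) : ℂ) * ((starRingEnd ℂ) (c j) * c j)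
        / ((lam : ℂ) - ((s j ^ 2 : ℝ) : ℂ))) + star Y ⬝ᵥ Y) = t * (lam : ℂ) := by
      rw [mul_add]
      have h2 : t * (∑ j, ((s j ^ 2 : ℝ) : ℂ) * ((starRingEnd ℂ) (c j) * c j)
          / ((lam : ℂ) - ((s j ^ 2 : ℝ) : ℂ))) = ∑ j, (starRingEnd ℂ) (c j) * d j := by
        rw [Finset.mul_sum]
        refine Finset.sum_congr rfl fun j _ => ?_
        rw [hdj j]
        field_simp
      rw [h2, ← hE2L]
      rw [mul_comm t ((lam:ℂ))]
      rw [← E2]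
      ring
    exact mul_left_cancel₀ ht0 h1
  -- final complex identity
  have hfin : (∑ j, ((s j ^ 2 : ℝ) : ℂ) * ((starRingEnd ℂ) (c j) * c j)
      / (((s j ^ 2 : ℝ) : ℂ) - (lam : ℂ))) = star Y ⬝ᵥ Y - (lam : ℂ) := by
    have h1 : ∀ j, ((s j ^ 2 : ℝ) : ℂ) * ((starRingEnd ℂ) (c j) * c j)
        / (((s j ^ 2 : ℝ) : ℂ) - (lam : ℂ))
        = -(((s j ^ 2 : ℝ) : ℂ) * ((starRingEnd ℂ) (c j) * c j)
        / ((lam : ℂ) - ((s j ^ 2 : ℝ) : ℂ))) := by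
      intro j
      rw [← div_neg, neg_sub]
    simp only [h1, Finset.sum_neg_distrib]
    linear_combination -hS
  -- pass to the reals
  have habs : ∀ z : ℂ, ((‖z‖ : ℝ) : ℂ) ^ 2 = (starRingEnd ℂ) z * z := by
    intro z
    rw [← Complex.ofReal_pow, Complex.sq_norm, Complex.normSq_eq_conj_mul_self]
  apply Complex.ofReal_injective
  push_cast
  push_cast at hfin
  simp only [habs]
  simp only [dotProduct, Pi.star_apply, Complex.star_def] at hfin
  exact hfin

end Aux

/-- The interlacing identity for singular values of `M = (M' ; Y*)` with last row `Y*`. -/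
theorem interlacing_identity_singular_values_row
    {p n : ℕ}
    (M' : Matrix (Fin p) (Fin n) ℂ) (Y : Fin n → ℂ)
    (M : Matrix (Fin (p + 1)) (Fin n) ℂ)
    (hMrow : ∀ (i : Fin p) (j : Fin n), M (Fin.castSucc i) j = M' i j)
    (hMY : ∀ j : Fin n, M (Fin.last p) j = star (Y j))
    (i : Fin (p + 1))
    (u : Fin (min p n) → EuclideanSpace ℂ (Fin n)) (hu : Orthonormal ℂ u)
    (hright : ∀ j : Fin (min p n),
      (M'ᴴ * M') *ᵥ (u j : Fin n → ℂ)
        = (((singVals M' (Fin.castLE (min_le_left p n) j)) ^ 2 : ℝ) : ℂ) • (u j : Fin n → ℂ))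
    (hsep : ∀ j : Fin p, singVals M' j ≠ singVals M i) :
    ∑ j : Fin (min p n),
        (singVals M' (Fin.castLE (min_le_left p n) j)) ^ 2 *
            ‖star (u j : Fin n → ℂ) ⬝ᵥ Y‖ ^ 2 /
          ((singVals M' (Fin.castLE (min_le_left p n) j)) ^ 2 - (singVals M i) ^ 2) =
      (∑ k : Fin n, ‖Y k‖ ^ 2) - (singVals M i) ^ 2 := by
  classical
  have hMM : (M * Mᴴ).IsHermitian := isHermitian_mul_conjTranspose_self M
  have hB : (M' * M'ᴴ).IsHermitian := isHermitian_mul_conjTranspose_self M'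
  have hMMnn : ∀ k, 0 ≤ hMM.eigenvalues k :=
    fun k => eigenvalues_self_mul_conjTranspose_nonneg M k
  have hBnn : ∀ k, 0 ≤ hB.eigenvalues k :=
    fun k => eigenvalues_self_mul_conjTranspose_nonneg M' k
  -- singular value basics
  have hsingM : ∀ a : Fin (p+1), singVals M a ^ 2 = hMM.eigenvalues (Tuple.sort hMM.eigenvalues a) := by
    intro a
    exact Real.sq_sqrt (hMMnn _)
  have hsingM' : ∀ a : Fin p, singVals M' a ^ 2 = hB.eigenvalues (Tuple.sort hB.eigenvalues a) := by
    intro a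
    exact Real.sq_sqrt (hBnn _)
  have hsnn : ∀ a : Fin p, 0 ≤ singVals M' a := fun a => Real.sqrt_nonneg _
  have hσnn : 0 ≤ singVals M i := Real.sqrt_nonneg _
  set lam : ℝ := singVals M i ^ 2 with hlamdef
  -- eigenvector of `M * Mᴴ` with eigenvalue `lam`
  have hlam : ∃ v : Fin (p+1) → ℂ, v ≠ 0 ∧ (M * Mᴴ) *ᵥ v = (lam : ℂ) • v := by
    refine ⟨⇑(hMM.eigenvectorBasis (Tuple.sort hMM.eigenvalues i)), ?_, ?_⟩
    · intro h
      apply hMM.eigenvectorBasis.orthonormal.ne_zero (Tuple.sort hMM.eigenvalues i)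
      ext k
      exact congrFun h k
    · rw [hMM.mulVec_eigenvectorBasis]
      rw [hlamdef, hsingM i]
      ext k
      simp [Complex.real_smul]
  -- `lam` is not an eigenvalue of `M' * M'ᴴ`
  have hBno : ∀ k, hB.eigenvalues k ≠ lam := by
    intro k hk
    have h1 : singVals M' ((Tuple.sort hB.eigenvalues).symm k) ^ 2 = hB.eigenvalues k := by
      rw [hsingM']
      congr 1
      exact Equiv.apply_symm_apply _ _
    apply hsep ((Tuple.sort hB.eigenvalues).symm k)
    have h2 : singVals M' ((Tuple.sort hB.eigenvalues).symm k) ^ 2 = singVals M i ^ 2 := by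
      rw [h1, hk]
    calc singVals M' ((Tuple.sort hB.eigenvalues).symm k)
        = Real.sqrt (singVals M' ((Tuple.sort hB.eigenvalues).symm k) ^ 2) :=
          (Real.sqrt_sq (hsnn _)).symm
      _ = Real.sqrt (singVals M i ^ 2) := by rw [h2]
      _ = singVals M i := Real.sqrt_sq hσnn
  -- orthonormality in dot-product form
  have huo : ∀ j k : Fin (min p n),
      star (u j : Fin n → ℂ) ⬝ᵥ (u k : Fin n → ℂ) = if j = k then (1:ℂ) else 0 := by
    intro j k
    have := orthonormal_iff_ite.mp hu j k
    rwa [EuclideanSpace.inner_eq_star_dotProduct, dotProduct_comm] at this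
  -- separation of squares
  have hsep2 : ∀ j : Fin (min p n),
      singVals M' (Fin.castLE (min_le_left p n) j) ^ 2 ≠ lam := by
    intro j hj
    apply hsep (Fin.castLE (min_le_left p n) j)
    calc singVals M' (Fin.castLE (min_le_left p n) j)
        = Real.sqrt (singVals M' (Fin.castLE (min_le_left p n) j) ^ 2) :=
          (Real.sqrt_sq (hsnn _)).symm
      _ = Real.sqrt (singVals M i ^ 2) := by rw [hj, hlamdef]
      _ = singVals M i := Real.sqrt_sq hσnn
  -- completeness
  have hcomp : M' *ᵥ (Y
      - (∑ j : Fin (min p n), (star (u j : Fin n → ℂ) ⬝ᵥ Y) • (u j : Fin n → ℂ) : Fin n → ℂ)) = 0 := by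
    apply completeness M' (fun j => (u j : Fin n → ℂ)) huo
      (fun j => singVals M' (Fin.castLE (min_le_left p n) j)) hright
    rcases le_or_gt p n with hpn | hnp
    · right
      rw [trace_eq_sum_eig hB]
      rw [← Equiv.sum_comp (Tuple.sort hB.eigenvalues)
        (fun k => (hB.eigenvalues k : ℂ))]
      rw [← Equiv.sum_comp (finCongr (min_eq_left hpn))
        (fun a => ((hB.eigenvalues (Tuple.sort hB.eigenvalues a) : ℂ)))]
      refine Finset.sum_congr rfl fun j _ => ?_
      have he : finCongr (min_eq_left hpn) j = Fin.castLE (min_le_left p n) j := by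
        apply Fin.ext
        simp
      rw [he, ← hsingM']
    · left
      exact min_eq_right hnp.le
  exact key_identity M' Y M hMrow hMY lam hlam hBno
    (fun j => singVals M' (Fin.castLE (min_le_left p n) j))
    (fun j => (u j : Fin n → ℂ)) huo hright hsep2 hcomp
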